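/- (Theorem 2, second bound.) In the estimated-eigensystem smoothing spline setting, ‖f̌₁ − f̃₁‖² ≤ 2ζ₄ Σ_{k=1}^K ‖Φ̌_k − Φ_k‖² + 6‖č‖² Σ_{k=1}^K [δ̌_k² Σ_{i=1}^n (Ǔ_{ik} − U_{ik})²] + 6 n κ² ‖č‖² Σ_{k=1}^K (δ̌_k − δ_k)² + 6 ζ₃' ‖Σ̌ − Σ̃‖_F². -/

import Mathlib

open Matrix BigOperators

/-- Squared Frobenius norm of a real matrix. -/
noncomputable def frobSq {m n : ℕ} (M : Matrix (Fin m) (Fin n) ℝ) : ℝ :=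
  ∑ i, ∑ j, (M i j) ^ 2

/-- Squared Euclidean norm of a real vector. -/
noncomputable def vnormSq {m : ℕ} (v : Fin m → ℝ) : ℝ := ∑ i, (v i) ^ 2

lemma vnormSq_nonneg {m : ℕ} (v : Fin m → ℝ) : 0 ≤ vnormSq v :=
  Finset.sum_nonneg fun _ _ => sq_nonneg _

lemma frobSq_nonneg {m n : ℕ} (M : Matrix (Fin m) (Fin n) ℝ) : 0 ≤ frobSq M :=
  Finset.sum_nonneg fun _ _ => Finset.sum_nonneg fun _ _ => sq_nonneg _

lemma vnormSq_mulVec_le {m l : ℕ} (E : Matrix (Fin m) (Fin l) ℝ) (v : Fin l → ℝ) :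
    vnormSq (E *ᵥ v) ≤ frobSq E * vnormSq v := by
  unfold vnormSq frobSq
  rw [Finset.sum_mul]
  apply Finset.sum_le_sum
  intro i _
  have : (E *ᵥ v) i = ∑ j, E i j * v j := by simp [Matrix.mulVec, dotProduct]
  rw [this]
  exact Finset.sum_mul_sq_le_sq_mul_sq Finset.univ (fun j => E i j) v

lemma frobSq_mul_le {a b c : ℕ} (A : Matrix (Fin a) (Fin b) ℝ) (B : Matrix (Fin b) (Fin c) ℝ) :
    frobSq (A * B) ≤ frobSq A * frobSq B := by
  unfold frobSq
  rw [Finset.sum_mul]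
  apply Finset.sum_le_sum
  intro i _
  calc ∑ j, ((A * B) i j) ^ 2 ≤ ∑ j, (∑ k, (A i k)^2) * (∑ k, (B k j)^2) := by
        apply Finset.sum_le_sum; intro j _
        have : (A * B) i j = ∑ k, A i k * B k j := by simp [Matrix.mul_apply]
        rw [this]
        exact Finset.sum_mul_sq_le_sq_mul_sq Finset.univ (fun k => A i k) (fun k => B k j)
    _ = (∑ k, (A i k)^2) * ∑ j, ∑ k, (B k j)^2 := by rw [Finset.mul_sum]
    _ = (∑ k, (A i k)^2) * ∑ k, ∑ j, (B k j)^2 := by rw [Finset.sum_comm]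

lemma dot_self_eq_vnormSq {m : ℕ} (v : Fin m → ℝ) : v ⬝ᵥ v = vnormSq v := by
  simp [dotProduct, vnormSq, sq]

lemma vnormSq_mulVec_orth {a b : ℕ} {M : Matrix (Fin a) (Fin b) ℝ} (h : Mᵀ * M = 1)
    (x : Fin b → ℝ) : vnormSq (M *ᵥ x) = vnormSq x := by
  rw [← dot_self_eq_vnormSq, ← dot_self_eq_vnormSq]
  rw [dotProduct_mulVec, ← vecMul_transpose, vecMul_vecMul, h, vecMul_one]

lemma spec_bound {m : ℕ} {A : Matrix (Fin m) (Fin m) ℝ} (hA : A.IsHermitian)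
    (hpos : ∀ k, 0 < hA.eigenvalues k) (c : ℝ) (hc : 0 ≤ c) (x : Fin m → ℝ) :
    vnormSq x ≤ (∑ k, ((hA.eigenvalues k) ^ 2)⁻¹) * vnormSq ((A + c • 1) *ᵥ x) := by
  set V : Matrix (Fin m) (Fin m) ℝ := (hA.eigenvectorUnitary : Matrix (Fin m) (Fin m) ℝ) with hV
  have hstar : star V = Vᵀ := by
    rw [Matrix.star_eq_conjTranspose, Matrix.conjTranspose_eq_transpose_of_trivial]
  have hVV : Vᵀ * V = 1 := by
    rw [← hstar]; exact Unitary.coe_star_mul_self hA.eigenvectorUnitary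
  have hVVt : V * Vᵀ = 1 := by
    rw [← hstar]; exact Unitary.coe_mul_star_self hA.eigenvectorUnitary
  set lam := hA.eigenvalues with hlam
  set z : Fin m → ℝ := Vᵀ *ᵥ x with hz
  have hx : x = V *ᵥ z := by rw [hz, mulVec_mulVec, hVVt, one_mulVec]
  have hDiag : Matrix.diagonal (RCLike.ofReal ∘ lam) = Matrix.diagonal lam := by
    congr 1
  have hAx : (A + c • 1) *ᵥ x = V *ᵥ (fun k => (lam k + c) * z k) := by
    have h1 : A *ᵥ x = V *ᵥ (Matrix.diagonal lam *ᵥ z) := by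
      nth_rewrite 1 [hA.spectral_theorem]
      rw [hDiag, Unitary.conjStarAlgAut_apply, hstar, ← Matrix.mulVec_mulVec, ← Matrix.mulVec_mulVec]
    have h2 : (fun k => (lam k + c) * z k) = Matrix.diagonal lam *ᵥ z + c • z := by
      funext k
      simp [Matrix.mulVec_diagonal]
      ring
    rw [Matrix.add_mulVec, h1, h2, Matrix.mulVec_add, Matrix.mulVec_smul,
      Matrix.smul_mulVec, Matrix.one_mulVec, ← hx]
  rw [hAx, hx, vnormSq_mulVec_orth hVV, vnormSq_mulVec_orth hVV]
  unfold vnormSq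
  calc ∑ k, z k ^ 2 ≤ ∑ k, ((lam k)^2)⁻¹ * (∑ j, ((lam j + c) * z j)^2) := by
        apply Finset.sum_le_sum
        intro k _
        have hk : lam k ≠ 0 := (hpos k).ne'
        have h1 : z k ^ 2 = ((lam k)^2)⁻¹ * ((lam k) * z k)^2 := by
          field_simp
        rw [h1]
        apply mul_le_mul_of_nonneg_left _ (by positivity)
        calc (lam k * z k)^2 ≤ ((lam k + c) * z k)^2 := by
              rw [mul_pow, mul_pow]
              apply mul_le_mul_of_nonneg_right _ (sq_nonneg _)
              nlinarith [(hpos k).le]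
          _ ≤ ∑ j, ((lam j + c) * z j)^2 :=
              Finset.single_le_sum (f := fun j => ((lam j + c) * z j)^2)
                (fun j _ => sq_nonneg _) (Finset.mem_univ k)
    _ = (∑ k, ((lam k)^2)⁻¹) * ∑ j, ((lam j + c) * z j)^2 := by rw [Finset.sum_mul]

lemma norm_sum_orthonormal {H : Type*} [NormedAddCommGroup H] [InnerProductSpace ℝ H]
    {Φ : ℕ → H} (hΦ : Orthonormal ℝ Φ) (b : ℕ → ℝ) (s : Finset ℕ) :
    ‖∑ k ∈ s, b k • Φ k‖ ^ 2 = ∑ k ∈ s, b k ^ 2 := by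
  rw [← real_inner_self_eq_norm_sq, hΦ.inner_sum]
  simp [sq]

lemma norm_sum_smul_le {H : Type*} [NormedAddCommGroup H] [InnerProductSpace ℝ H]
    (a : ℕ → ℝ) (w : ℕ → H) (s : Finset ℕ) :
    ‖∑ k ∈ s, a k • w k‖ ^ 2 ≤ (∑ k ∈ s, a k ^ 2) * ∑ k ∈ s, ‖w k‖ ^ 2 := by
  calc ‖∑ k ∈ s, a k • w k‖ ^ 2 ≤ (∑ k ∈ s, |a k| * ‖w k‖) ^ 2 := by
        apply pow_le_pow_left₀ (norm_nonneg _)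
        refine (norm_sum_le _ _).trans_eq ?_
        apply Finset.sum_congr rfl
        intro k _
        rw [norm_smul, Real.norm_eq_abs]
    _ ≤ (∑ k ∈ s, |a k| ^ 2) * ∑ k ∈ s, ‖w k‖ ^ 2 :=
        Finset.sum_mul_sq_le_sq_mul_sq s (fun k => |a k|) (fun k => ‖w k‖)
    _ = (∑ k ∈ s, a k ^ 2) * ∑ k ∈ s, ‖w k‖ ^ 2 := by simp [sq_abs]

lemma two_sq_bound (a b : ℝ) : (a + b) ^ 2 ≤ 2 * (a ^ 2 + b ^ 2) := by
  nlinarith [sq_nonneg (a - b)]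

lemma three_sq_bound (x y z : ℝ) : (x + y + z) ^ 2 ≤ 3 * (x ^ 2 + y ^ 2 + z ^ 2) := by
  nlinarith [sq_nonneg (x - y), sq_nonneg (y - z), sq_nonneg (x - z)]

set_option maxHeartbeats 1000000 in
/-- Theorem 2, second bound: in the estimated-eigensystem smoothing spline
setting, `‖f̌₁ − f̃₁‖² ≤ 2ζ₄ Σ_k ‖Φ̌_k − Φ_k‖² + 6‖č‖² Σ_k [δ̌_k² Σ_i (Ǔ_{ik} − U_{ik})²]
  + 6 n κ² ‖č‖² Σ_k (δ̌_k − δ_k)² + 6 ζ₃' ‖Σ̌ − Σ̃‖_F²`, where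
`ζ₄ = ‖č‖² n κ'² C'_K` and `ζ₃' = n κ² C_K ζ₁ B̃ B̌`. -/
theorem stmt17
    (n p : ℕ) (hp : 1 ≤ p) (hpn : p < n)
    (y : Fin n → ℝ) (lam : ℝ) (hlam : 0 < lam)
    (T Q₁ : Matrix (Fin n) (Fin p) ℝ) (Q₂ : Matrix (Fin n) (Fin (n - p)) ℝ)
    (R : Matrix (Fin p) (Fin p) ℝ)
    (hQ₁ : Q₁ᵀ * Q₁ = 1) (hQ₂ : Q₂ᵀ * Q₂ = 1) (hQ₁₂ : Q₁ᵀ * Q₂ = 0)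
    (hQ : Q₁ * Q₁ᵀ + Q₂ * Q₂ᵀ = 1)
    (hR : IsUnit R) (hRtri : R.BlockTriangular id) (hT : T = Q₁ * R)
    (K : ℕ) (hK : 1 ≤ K) (κ κ' : ℝ) (hκ : 0 < κ) (hκ' : 0 < κ')
    (δ : ℕ → ℝ) (hδ0 : ∀ k, 0 ≤ δ k) (hδmono : ∀ k, δ (k + 1) ≤ δ k) (hδsum : Summable δ)
    (δc : ℕ → ℝ) (hδc0 : ∀ k < K, 0 ≤ δc k)
    (U : Fin n → ℕ → ℝ) (hU : ∀ i k, |U i k| ≤ κ)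
    (Uc : Fin n → ℕ → ℝ) (hUc : ∀ i, ∀ k < K, |Uc i k| ≤ κ')
    (St Sc : Matrix (Fin n) (Fin n) ℝ)
    (hSt : ∀ i j, St i j = ∑ k ∈ Finset.range K, δ k * U i k * U j k)
    (hSc : ∀ i j, Sc i j = ∑ k ∈ Finset.range K, δc k * Uc i k * Uc j k)
    (hStpsd : St.PosSemidef) (hScpsd : Sc.PosSemidef)
    (hpdt : (Q₂ᵀ * St * Q₂).PosDef) (hpdc : (Q₂ᵀ * Sc * Q₂).PosDef)
    (hA : (T * ((Tᵀ * T)⁻¹ * (Tᵀ * T)⁻¹) * Tᵀ).IsHermitian)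
    (ct : Fin n → ℝ) (dt : Fin p → ℝ)
    (hcdt : T *ᵥ dt + (St + ((n : ℝ) * lam) • 1) *ᵥ ct = y) (hct0 : Tᵀ *ᵥ ct = 0)
    (cc : Fin n → ℝ) (dc : Fin p → ℝ)
    (hcdc : T *ᵥ dc + (Sc + ((n : ℝ) * lam) • 1) *ᵥ cc = y) (hcc0 : Tᵀ *ᵥ cc = 0)
    {H : Type*} [NormedAddCommGroup H] [InnerProductSpace ℝ H] [CompleteSpace H]
    (φ : Fin p → H) (Φ Φc : ℕ → H) (hφ : Orthonormal ℝ φ) (hΦ : Orthonormal ℝ Φ) :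
    ‖(∑ k ∈ Finset.range K, (δc k * ∑ i, cc i * Uc i k) • Φc k) -
        (∑ k ∈ Finset.range K, (δ k * ∑ i, ct i * U i k) • Φ k)‖ ^ 2 ≤
      2 * (vnormSq cc * (n : ℝ) * κ' ^ 2 * (∑ k ∈ Finset.range K, δc k ^ 2)) *
          (∑ k ∈ Finset.range K, ‖Φc k - Φ k‖ ^ 2) +
        6 * vnormSq cc *
          (∑ k ∈ Finset.range K, δc k ^ 2 * ∑ i, (Uc i k - U i k) ^ 2) +
        6 * (n : ℝ) * κ ^ 2 * vnormSq cc * (∑ k ∈ Finset.range K, (δc k - δ k) ^ 2) +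
        6 * ((n : ℝ) * κ ^ 2 * (∑ k ∈ Finset.range K, δ k ^ 2) *
            ((frobSq Q₂) ^ 3 * vnormSq (Q₂ᵀ *ᵥ y)) *
            (∑ k, ((hpdt.1.eigenvalues k) ^ 2)⁻¹) *
            (∑ k, ((hpdc.1.eigenvalues k) ^ 2)⁻¹)) * frobSq (Sc - St) := by
  classical
  set S := Finset.range K with hSdef
  set ac : ℕ → ℝ := fun k => δc k * ∑ i, cc i * Uc i k with hac
  set bt : ℕ → ℝ := fun k => δ k * ∑ i, ct i * U i k with hbt
  set c : ℝ := (n : ℝ) * lam with hcdef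
  have hc : (0:ℝ) ≤ c := by positivity
  set Bt : ℝ := ∑ k, ((hpdt.1.eigenvalues k) ^ 2)⁻¹ with hBt
  set Bc : ℝ := ∑ k, ((hpdc.1.eigenvalues k) ^ 2)⁻¹ with hBc
  set w : Fin (n - p) → ℝ := Q₂ᵀ *ᵥ y with hw
  -- Cauchy-Schwarz helper
  have hCS : ∀ (v u : Fin n → ℝ), (∑ i, v i * u i) ^ 2 ≤ vnormSq v * (∑ i, (u i) ^ 2) := by
    intro v u
    unfold vnormSq
    exact Finset.sum_mul_sq_le_sq_mul_sq Finset.univ v u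
  have hUb : ∀ k, (∑ i, (U i k) ^ 2) ≤ (n : ℝ) * κ ^ 2 := by
    intro k
    calc ∑ i, (U i k) ^ 2 ≤ ∑ _i : Fin n, κ ^ 2 := by
          apply Finset.sum_le_sum
          intro i _
          have h := abs_le.mp (hU i k)
          exact sq_le_sq' h.1 h.2
      _ = (n : ℝ) * κ ^ 2 := by simp [mul_comm]
  have hUcb : ∀ k, k < K → (∑ i, (Uc i k) ^ 2) ≤ (n : ℝ) * κ' ^ 2 := by
    intro k hk
    calc ∑ i, (Uc i k) ^ 2 ≤ ∑ _i : Fin n, κ' ^ 2 := by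
          apply Finset.sum_le_sum
          intro i _
          have h := abs_le.mp (hUc i k hk)
          exact sq_le_sq' h.1 h.2
      _ = (n : ℝ) * κ' ^ 2 := by simp [mul_comm]
  ----------------------------------------------------------------
  -- Matrix part: vnormSq (cc - ct) is controlled by frobSq (Sc - St)
  ----------------------------------------------------------------
  have hRT : IsUnit (Rᵀ).det := by
    rw [Matrix.det_transpose]; exact (Matrix.isUnit_iff_isUnit_det R).mp hR
  have hq1 : ∀ (v : Fin n → ℝ), Tᵀ *ᵥ v = 0 → Q₁ᵀ *ᵥ v = 0 := by
    intro v hv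
    have h1 : Rᵀ *ᵥ (Q₁ᵀ *ᵥ v) = 0 := by
      rw [mulVec_mulVec, ← Matrix.transpose_mul, ← hT]; exact hv
    have h2 : (Rᵀ)⁻¹ *ᵥ (Rᵀ *ᵥ (Q₁ᵀ *ᵥ v)) = 0 := by rw [h1, mulVec_zero]
    rwa [mulVec_mulVec, Matrix.nonsing_inv_mul _ hRT, one_mulVec] at h2
  have hQproj : ∀ (v : Fin n → ℝ), Tᵀ *ᵥ v = 0 → v = Q₂ *ᵥ (Q₂ᵀ *ᵥ v) := by
    intro v hv
    have h1 : (Q₁ * Q₁ᵀ + Q₂ * Q₂ᵀ) *ᵥ v = v := by rw [hQ, one_mulVec]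
    rw [Matrix.add_mulVec, ← mulVec_mulVec, ← mulVec_mulVec, hq1 v hv, mulVec_zero,
      zero_add] at h1
    exact h1.symm
  have hccQ := hQproj cc hcc0
  have hctQ := hQproj ct hct0
  set vc : Fin (n - p) → ℝ := Q₂ᵀ *ᵥ cc with hvc
  set vt : Fin (n - p) → ℝ := Q₂ᵀ *ᵥ ct with hvt
  have hQ2T : Q₂ᵀ * T = 0 := by
    have h0 : Q₂ᵀ * Q₁ = 0 := by
      have h := congrArg Matrix.transpose hQ₁₂
      simpa using h
    rw [hT, ← Matrix.mul_assoc, h0, Matrix.zero_mul]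
  have hMatId : ∀ Sx : Matrix (Fin n) (Fin n) ℝ,
      Q₂ᵀ * (Sx + c • 1) * Q₂ = Q₂ᵀ * Sx * Q₂ + c • 1 := by
    intro Sx
    rw [Matrix.mul_add, Matrix.mul_smul, Matrix.mul_one, Matrix.add_mul, Matrix.smul_mul, hQ₂]
  have hsys : ∀ (Sx : Matrix (Fin n) (Fin n) ℝ) (cx : Fin n → ℝ) (dx : Fin p → ℝ),
      T *ᵥ dx + (Sx + c • 1) *ᵥ cx = y → cx = Q₂ *ᵥ (Q₂ᵀ *ᵥ cx) →
      (Q₂ᵀ * Sx * Q₂ + c • 1) *ᵥ (Q₂ᵀ *ᵥ cx) = w := by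
    intro Sx cx dx hsx hcx
    have h1 := congrArg (fun u => Q₂ᵀ *ᵥ u) hsx
    simp only [Matrix.mulVec_add, mulVec_mulVec] at h1
    rw [hQ2T, zero_mulVec, zero_add] at h1
    rw [hw, ← h1]
    nth_rewrite 2 [hcx]
    simp only [mulVec_mulVec]
    rw [← Matrix.mul_assoc, hMatId Sx]
  have hMc := hsys Sc cc dc hcdc hccQ
  have hMt := hsys St ct dt hcdt hctQ
  have hdiff : (Q₂ᵀ * Sc * Q₂ + c • 1) *ᵥ (vc - vt) = (Q₂ᵀ * (St - Sc) * Q₂) *ᵥ vt := by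
    have h1 : Q₂ᵀ * (St - Sc) * Q₂ = (Q₂ᵀ * St * Q₂ + c • 1) - (Q₂ᵀ * Sc * Q₂ + c • 1) := by
      rw [Matrix.mul_sub, Matrix.sub_mul]
      abel
    rw [Matrix.mulVec_sub, hMc, h1, Matrix.sub_mulVec, hMt]
  have hkey : vnormSq (cc - ct) ≤
      (frobSq Q₂) ^ 3 * vnormSq w * Bt * Bc * frobSq (Sc - St) := by
    have hq2ge1 : 1 ≤ frobSq Q₂ := by
      have h1 : frobSq Q₂ = ∑ j, (Q₂ᵀ * Q₂) j j := by
        unfold frobSq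
        rw [Finset.sum_comm]
        apply Finset.sum_congr rfl
        intro j _
        simp [Matrix.mul_apply, sq]
      rw [h1, hQ₂]
      simp only [Matrix.one_apply_eq, Finset.sum_const, Finset.card_univ, Fintype.card_fin,
        nsmul_eq_mul, mul_one]
      have : 1 ≤ n - p := Nat.le_sub_of_add_le (by omega)
      exact_mod_cast this
    have hFq0 : 0 ≤ frobSq Q₂ := frobSq_nonneg _
    have hW0 : 0 ≤ vnormSq w := vnormSq_nonneg _
    have hBt0 : 0 ≤ Bt := Finset.sum_nonneg fun k _ => by positivity
    have hBc0 : 0 ≤ Bc := Finset.sum_nonneg fun k _ => by positivity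
    have hF0 : 0 ≤ frobSq (Sc - St) := frobSq_nonneg _
    have hFts : frobSq (St - Sc) = frobSq (Sc - St) := by
      unfold frobSq
      apply Finset.sum_congr rfl; intro i _
      apply Finset.sum_congr rfl; intro j _
      have h : (St - Sc) i j = -((Sc - St) i j) := by
        rw [Matrix.sub_apply, Matrix.sub_apply]; ring
      rw [h, neg_sq]
    have hFqT : frobSq Q₂ᵀ = frobSq Q₂ := by
      unfold frobSq
      rw [Finset.sum_comm]
      rfl
    have s1 : vnormSq (cc - ct) = vnormSq (vc - vt) := by
      have h1 : cc - ct = Q₂ *ᵥ (vc - vt) := by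
        rw [Matrix.mulVec_sub, ← hccQ, ← hctQ]
      rw [h1, vnormSq_mulVec_orth hQ₂]
    have s2 : vnormSq (vc - vt) ≤ Bc * vnormSq ((Q₂ᵀ * Sc * Q₂ + c • 1) *ᵥ (vc - vt)) :=
      spec_bound hpdc.1 (fun k => hpdc.eigenvalues_pos k) c hc (vc - vt)
    have s3 : vnormSq ((Q₂ᵀ * (St - Sc) * Q₂) *ᵥ vt) ≤
        frobSq (Q₂ᵀ * (St - Sc) * Q₂) * vnormSq vt := vnormSq_mulVec_le _ _
    have s4 : frobSq (Q₂ᵀ * (St - Sc) * Q₂) ≤ frobSq Q₂ * frobSq (Sc - St) * frobSq Q₂ := by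
      calc frobSq (Q₂ᵀ * (St - Sc) * Q₂) ≤ frobSq (Q₂ᵀ * (St - Sc)) * frobSq Q₂ :=
            frobSq_mul_le _ _
        _ ≤ frobSq Q₂ᵀ * frobSq (St - Sc) * frobSq Q₂ := by
            apply mul_le_mul_of_nonneg_right (frobSq_mul_le _ _) hFq0
        _ = frobSq Q₂ * frobSq (Sc - St) * frobSq Q₂ := by rw [hFqT, hFts]
    have s5 : vnormSq vt ≤ Bt * vnormSq w := by
      have := spec_bound hpdt.1 (fun k => hpdt.eigenvalues_pos k) c hc vt
      rwa [hMt] at this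
    have hvt0 : 0 ≤ vnormSq vt := vnormSq_nonneg _
    calc vnormSq (cc - ct) = vnormSq (vc - vt) := s1
      _ ≤ Bc * vnormSq ((Q₂ᵀ * Sc * Q₂ + c • 1) *ᵥ (vc - vt)) := s2
      _ = Bc * vnormSq ((Q₂ᵀ * (St - Sc) * Q₂) *ᵥ vt) := by rw [hdiff]
      _ ≤ Bc * (frobSq (Q₂ᵀ * (St - Sc) * Q₂) * vnormSq vt) :=
          mul_le_mul_of_nonneg_left s3 hBc0
      _ ≤ Bc * ((frobSq Q₂ * frobSq (Sc - St) * frobSq Q₂) * vnormSq vt) := by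
          apply mul_le_mul_of_nonneg_left _ hBc0
          exact mul_le_mul_of_nonneg_right s4 hvt0
      _ ≤ Bc * ((frobSq Q₂ * frobSq (Sc - St) * frobSq Q₂) * (Bt * vnormSq w)) := by
          apply mul_le_mul_of_nonneg_left _ hBc0
          apply mul_le_mul_of_nonneg_left s5
            (mul_nonneg (mul_nonneg hFq0 hF0) hFq0)
      _ = (frobSq Q₂) ^ 2 * (vnormSq w * Bt * Bc * frobSq (Sc - St)) := by ring
      _ ≤ (frobSq Q₂) ^ 3 * (vnormSq w * Bt * Bc * frobSq (Sc - St)) := by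
          apply mul_le_mul_of_nonneg_right _
            (mul_nonneg (mul_nonneg (mul_nonneg hW0 hBt0) hBc0) hF0)
          exact pow_le_pow_right₀ hq2ge1 (by norm_num)
      _ = (frobSq Q₂) ^ 3 * vnormSq w * Bt * Bc * frobSq (Sc - St) := by ring
  ----------------------------------------------------------------
  -- Hilbert space part
  ----------------------------------------------------------------
  have hsplit : (∑ k ∈ S, ac k • Φc k) - (∑ k ∈ S, bt k • Φ k)
      = (∑ k ∈ S, ac k • (Φc k - Φ k)) + (∑ k ∈ S, (ac k - bt k) • Φ k) := by
    rw [← Finset.sum_add_distrib, ← Finset.sum_sub_distrib]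
    apply Finset.sum_congr rfl
    intro k _
    rw [smul_sub, sub_smul]
    abel
  have hP1 : ‖∑ k ∈ S, ac k • (Φc k - Φ k)‖ ^ 2 ≤
      (∑ k ∈ S, (ac k) ^ 2) * ∑ k ∈ S, ‖Φc k - Φ k‖ ^ 2 :=
    norm_sum_smul_le ac (fun k => Φc k - Φ k) S
  have hacsum : ∑ k ∈ S, (ac k) ^ 2 ≤
      vnormSq cc * (n : ℝ) * κ' ^ 2 * ∑ k ∈ S, (δc k) ^ 2 := by
    have h1 : ∀ k ∈ S, (ac k) ^ 2 ≤ (vnormSq cc * (n : ℝ) * κ' ^ 2) * (δc k) ^ 2 := by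
      intro k hk
      have hkK : k < K := Finset.mem_range.mp hk
      have h2 : (ac k) ^ 2 = (δc k) ^ 2 * (∑ i, cc i * Uc i k) ^ 2 := by
        rw [hac]; ring
      rw [h2]
      have h3 : (∑ i, cc i * Uc i k) ^ 2 ≤ vnormSq cc * ((n : ℝ) * κ' ^ 2) := by
        calc (∑ i, cc i * Uc i k) ^ 2 ≤ vnormSq cc * (∑ i, (Uc i k) ^ 2) :=
              hCS cc (fun i => Uc i k)
          _ ≤ vnormSq cc * ((n : ℝ) * κ' ^ 2) :=
              mul_le_mul_of_nonneg_left (hUcb k hkK) (vnormSq_nonneg cc)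
      calc (δc k) ^ 2 * (∑ i, cc i * Uc i k) ^ 2 ≤
            (δc k) ^ 2 * (vnormSq cc * ((n : ℝ) * κ' ^ 2)) :=
            mul_le_mul_of_nonneg_left h3 (sq_nonneg _)
        _ = (vnormSq cc * (n : ℝ) * κ' ^ 2) * (δc k) ^ 2 := by ring
    calc ∑ k ∈ S, (ac k) ^ 2 ≤ ∑ k ∈ S, (vnormSq cc * (n : ℝ) * κ' ^ 2) * (δc k) ^ 2 :=
          Finset.sum_le_sum h1
      _ = vnormSq cc * (n : ℝ) * κ' ^ 2 * ∑ k ∈ S, (δc k) ^ 2 := by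
          rw [← Finset.mul_sum]
  have hP2 : ‖∑ k ∈ S, (ac k - bt k) • Φ k‖ ^ 2 = ∑ k ∈ S, (ac k - bt k) ^ 2 :=
    norm_sum_orthonormal hΦ _ S
  have hdk : ∀ k ∈ S, (ac k - bt k) ^ 2 ≤
      (3 * vnormSq cc) * (δc k ^ 2 * ∑ i, (Uc i k - U i k) ^ 2) +
      (3 * ((n : ℝ) * κ ^ 2) * vnormSq cc) * ((δc k - δ k) ^ 2) +
      (3 * ((n : ℝ) * κ ^ 2) * vnormSq (cc - ct)) * (δ k ^ 2) := by
    intro k hk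
    have e1 : ac k - bt k = δc k * (∑ i, cc i * (Uc i k - U i k)) +
        (δc k - δ k) * (∑ i, cc i * U i k) + δ k * (∑ i, (cc i - ct i) * U i k) := by
      simp only [hac, hbt, mul_sub, sub_mul, Finset.sum_sub_distrib]
      ring
    have hA2 : (∑ i, cc i * (Uc i k - U i k)) ^ 2 ≤
        vnormSq cc * ∑ i, (Uc i k - U i k) ^ 2 := hCS cc _
    have hB2 : (∑ i, cc i * U i k) ^ 2 ≤ vnormSq cc * ((n : ℝ) * κ ^ 2) := by
      calc (∑ i, cc i * U i k) ^ 2 ≤ vnormSq cc * (∑ i, (U i k) ^ 2) := hCS cc _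
        _ ≤ vnormSq cc * ((n : ℝ) * κ ^ 2) :=
            mul_le_mul_of_nonneg_left (hUb k) (vnormSq_nonneg cc)
    have hC2 : (∑ i, (cc i - ct i) * U i k) ^ 2 ≤ vnormSq (cc - ct) * ((n : ℝ) * κ ^ 2) := by
      calc (∑ i, (cc i - ct i) * U i k) ^ 2 ≤ vnormSq (cc - ct) * (∑ i, (U i k) ^ 2) := by
            have := hCS (cc - ct) (fun i => U i k)
            simpa using this
        _ ≤ vnormSq (cc - ct) * ((n : ℝ) * κ ^ 2) :=
            mul_le_mul_of_nonneg_left (hUb k) (vnormSq_nonneg _)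
    rw [e1]
    set a1 := ∑ i, cc i * (Uc i k - U i k) with ha1
    set a2 := ∑ i, cc i * U i k with ha2
    set a3 := ∑ i, (cc i - ct i) * U i k with ha3
    have q1 : (δc k * a1) ^ 2 ≤ (δc k) ^ 2 * (vnormSq cc * ∑ i, (Uc i k - U i k) ^ 2) := by
      rw [mul_pow]; exact mul_le_mul_of_nonneg_left hA2 (sq_nonneg _)
    have q2 : ((δc k - δ k) * a2) ^ 2 ≤ (δc k - δ k) ^ 2 * (vnormSq cc * ((n : ℝ) * κ ^ 2)) := by
      rw [mul_pow]; exact mul_le_mul_of_nonneg_left hB2 (sq_nonneg _)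
    have q3 : (δ k * a3) ^ 2 ≤ (δ k) ^ 2 * (vnormSq (cc - ct) * ((n : ℝ) * κ ^ 2)) := by
      rw [mul_pow]; exact mul_le_mul_of_nonneg_left hC2 (sq_nonneg _)
    have q4 := three_sq_bound (δc k * a1) ((δc k - δ k) * a2) (δ k * a3)
    linarith [q1, q2, q3, q4]
  have hsum2 : ∑ k ∈ S, (ac k - bt k) ^ 2 ≤
      3 * vnormSq cc * (∑ k ∈ S, δc k ^ 2 * ∑ i, (Uc i k - U i k) ^ 2) +
      3 * ((n : ℝ) * κ ^ 2) * vnormSq cc * (∑ k ∈ S, (δc k - δ k) ^ 2) +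
      3 * ((n : ℝ) * κ ^ 2) * vnormSq (cc - ct) * (∑ k ∈ S, δ k ^ 2) := by
    calc ∑ k ∈ S, (ac k - bt k) ^ 2 ≤
        ∑ k ∈ S, ((3 * vnormSq cc) * (δc k ^ 2 * ∑ i, (Uc i k - U i k) ^ 2) +
          (3 * ((n : ℝ) * κ ^ 2) * vnormSq cc) * ((δc k - δ k) ^ 2) +
          (3 * ((n : ℝ) * κ ^ 2) * vnormSq (cc - ct)) * (δ k ^ 2)) :=
          Finset.sum_le_sum hdk
      _ = _ := by
          rw [Finset.sum_add_distrib, Finset.sum_add_distrib, ← Finset.mul_sum,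
            ← Finset.mul_sum, ← Finset.mul_sum]
  -- final assembly
  have htri : ‖(∑ k ∈ S, ac k • Φc k) - (∑ k ∈ S, bt k • Φ k)‖ ^ 2 ≤
      2 * ‖∑ k ∈ S, ac k • (Φc k - Φ k)‖ ^ 2 + 2 * ‖∑ k ∈ S, (ac k - bt k) • Φ k‖ ^ 2 := by
    rw [hsplit]
    have h1 := norm_add_le (∑ k ∈ S, ac k • (Φc k - Φ k)) (∑ k ∈ S, (ac k - bt k) • Φ k)
    have h2 : ‖∑ k ∈ S, ac k • (Φc k - Φ k) + ∑ k ∈ S, (ac k - bt k) • Φ k‖ ^ 2 ≤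
        (‖∑ k ∈ S, ac k • (Φc k - Φ k)‖ + ‖∑ k ∈ S, (ac k - bt k) • Φ k‖) ^ 2 :=
      pow_le_pow_left₀ (norm_nonneg _) h1 2
    linarith [h2, two_sq_bound ‖∑ k ∈ S, ac k • (Φc k - Φ k)‖
      ‖∑ k ∈ S, (ac k - bt k) • Φ k‖]
  have hΦd0 : 0 ≤ ∑ k ∈ S, ‖Φc k - Φ k‖ ^ 2 := Finset.sum_nonneg fun _ _ => sq_nonneg _
  have hδsq0 : 0 ≤ ∑ k ∈ S, δ k ^ 2 := Finset.sum_nonneg fun _ _ => sq_nonneg _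
  have hkfin : 3 * ((n : ℝ) * κ ^ 2) * vnormSq (cc - ct) * (∑ k ∈ S, δ k ^ 2) ≤
      3 * ((n : ℝ) * κ ^ 2) * ((frobSq Q₂) ^ 3 * vnormSq w * Bt * Bc * frobSq (Sc - St)) *
        (∑ k ∈ S, δ k ^ 2) := by
    apply mul_le_mul_of_nonneg_right _ hδsq0
    apply mul_le_mul_of_nonneg_left hkey (by positivity)
  have h2P1 : 2 * ‖∑ k ∈ S, ac k • (Φc k - Φ k)‖ ^ 2 ≤
      2 * (vnormSq cc * (n : ℝ) * κ' ^ 2 * (∑ k ∈ S, δc k ^ 2)) *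
        (∑ k ∈ S, ‖Φc k - Φ k‖ ^ 2) := by
    have h1 := hP1.trans (mul_le_mul_of_nonneg_right hacsum hΦd0)
    linarith [h1]
  calc ‖(∑ k ∈ S, ac k • Φc k) - (∑ k ∈ S, bt k • Φ k)‖ ^ 2 ≤
      2 * ‖∑ k ∈ S, ac k • (Φc k - Φ k)‖ ^ 2 + 2 * ‖∑ k ∈ S, (ac k - bt k) • Φ k‖ ^ 2 := htri
    _ ≤ 2 * (vnormSq cc * (n : ℝ) * κ' ^ 2 * (∑ k ∈ S, δc k ^ 2)) *
          (∑ k ∈ S, ‖Φc k - Φ k‖ ^ 2) + 2 * ∑ k ∈ S, (ac k - bt k) ^ 2 := by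
        rw [hP2]
        linarith [h2P1]
    _ ≤ _ := by
        linarith [hsum2, hkfin]
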